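/- For every critical subset J ⊆ {1,…,N}, the complex moment map μ_ℂ is constant on C_J with value −β_J^⊥. Consequently, if β is generic in the sense that β_J^⊥ ≠ β_{J′}^⊥ for all distinct critical subsets J ≠ J′, then the sets C_J, as J ranges over the critical subsets, are pairwise disjoint. -/

import Mathlib

noncomputable section

/-- `T*ℂᴺ = ℂᴺ × ℂᴺ` with its L² (Hermitian) norm. -/
abbrev HypPhase (N : ℕ) := WithLp 2 (EuclideanSpace ℂ (Fin N) × EuclideanSpace ℂ (Fin N))

/-- The inclusion `ℝᴺ ⊆ ℂᴺ`. -/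
def toC {N : ℕ} (v : EuclideanSpace ℝ (Fin N)) : EuclideanSpace ℂ (Fin N) :=
  (WithLp.equiv 2 (Fin N → ℂ)).symm fun i => ((WithLp.equiv 2 (Fin N → ℝ) v) i : ℂ)

/-- `J` is a critical subset for the family of weights `u`: `u i` lies in the span of
`{u j : j ∈ J}` iff `i ∈ J`. -/
def IsCriticalSubset {N : ℕ} (u : Fin N → EuclideanSpace ℝ (Fin N))
    (J : Set (Fin N)) : Prop :=
  ∀ i, u i ∈ Submodule.span ℝ (u '' J) ↔ i ∈ J

/-- The subset `C_J` of `T*ℂᴺ` associated to a critical subset `J`. -/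
def CJ {N : ℕ} (u : Fin N → EuclideanSpace ℝ (Fin N))
    (μC : HypPhase N → EuclideanSpace ℂ (Fin N)) (J : Set (Fin N)) :
    Set (HypPhase N) :=
  {p | (∀ i ∈ J, (inner ℂ (toC (u i)) (μC p) : ℂ) = 0) ∧
       (∀ j ∉ J, p.ofLp.1 j = 0 ∧ p.ofLp.2 j = 0)}

/-- `β_J^⊥ = β - P_J β`, where `P_J` is the orthogonal projection of `ℂᴺ` onto the
complex span of `{u_j : j ∈ J}`. -/
def betaJperp {N : ℕ} (u : Fin N → EuclideanSpace ℝ (Fin N))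
    (β : EuclideanSpace ℂ (Fin N)) (J : Set (Fin N)) : EuclideanSpace ℂ (Fin N) :=
  β - (Submodule.orthogonalProjectionOnto (Submodule.span ℂ ((fun j => toC (u j)) '' J)) β :
    EuclideanSpace ℂ (Fin N))

/-- The complex moment map is constant on each `C_J`, equal to
`−β_J^⊥`; consequently, for generic `β` the sets `C_J` are pairwise disjoint. -/
theorem stmt16 (N : ℕ) (𝔱 : Submodule ℝ (EuclideanSpace ℝ (Fin N)))
    (u : Fin N → EuclideanSpace ℝ (Fin N))
    (hu : ∀ j, u j = (Submodule.orthogonalProjectionOnto 𝔱 (EuclideanSpace.single j 1) :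
      EuclideanSpace ℝ (Fin N)))
    (β : EuclideanSpace ℂ (Fin N))
    (hβ : β ∈ Submodule.span ℂ (toC '' (𝔱 : Set (EuclideanSpace ℝ (Fin N)))))
    (μC : HypPhase N → EuclideanSpace ℂ (Fin N))
    (hμC : ∀ p : HypPhase N, μC p = (∑ j, (p.ofLp.1 j * p.ofLp.2 j) • toC (u j)) - β) :
    (∀ J : Set (Fin N), IsCriticalSubset u J →
      ∀ p ∈ CJ u μC J, μC p = -(betaJperp u β J)) ∧
    ((∀ J J' : Set (Fin N), IsCriticalSubset u J → IsCriticalSubset u J' → J ≠ J' →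
        betaJperp u β J ≠ betaJperp u β J') →
      ∀ J J' : Set (Fin N), IsCriticalSubset u J → IsCriticalSubset u J' → J ≠ J' →
        CJ u μC J ∩ CJ u μC J' = ∅) := by
  have key : ∀ J : Set (Fin N), ∀ p ∈ CJ u μC J, μC p = -(betaJperp u β J) := by
    intro J p hp
    obtain ⟨h1, h2⟩ := hp
    set S := Submodule.span ℂ ((fun j => toC (u j)) '' J) with hS
    set s := ∑ j, (p.ofLp.1 j * p.ofLp.2 j) • toC (u j) with hs
    have hsS : s ∈ S := by
      apply Submodule.sum_mem
      intro j _
      by_cases hj : j ∈ J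
      · exact Submodule.smul_mem _ _ (Submodule.subset_span ⟨j, hj, rfl⟩)
      · rw [(h2 j hj).1, zero_mul, zero_smul]; exact Submodule.zero_mem _
    have horth : ∀ w ∈ S, (inner ℂ (μC p) w : ℂ) = 0 := by
      intro w hw
      induction hw using Submodule.span_induction with
      | mem w hw =>
        obtain ⟨j, hj, rfl⟩ := hw
        rw [inner_eq_zero_symm]
        exact h1 j hj
      | zero => exact inner_zero_right _
      | add x y _ _ hx hy => rw [inner_add_right, hx, hy, add_zero]
      | smul c x _ hx => rw [inner_smul_right, hx, mul_zero]
    have hproj : (Submodule.orthogonalProjectionOnto S β : EuclideanSpace ℂ (Fin N)) = s := by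
      rw [← Submodule.starProjection_apply]
      apply Submodule.eq_starProjection_of_mem_of_inner_eq_zero hsS
      intro w hw
      have : β - s = -(μC p) := by rw [hμC p]; abel
      rw [this, inner_neg_left, horth w hw, neg_zero]
    have hproj' : (Submodule.orthogonalProjectionOnto (Submodule.span ℂ ((fun j => toC (u j)) '' J)) β :
        EuclideanSpace ℂ (Fin N)) = s := hproj
    rw [hμC p, betaJperp, hproj']
    abel
  refine ⟨fun J _ p hp => key J p hp, fun hgen J J' hJ hJ' hne => ?_⟩
  by_contra h
  obtain ⟨p, hpJ, hpJ'⟩ := Set.nonempty_iff_ne_empty.2 h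
  have := (key J p hpJ).symm.trans (key J' p hpJ')
  exact hgen J J' hJ hJ' hne (neg_injective this)
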